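/- Let w be a synaptic kernel with sup_{x∈ℝ^m} ∫_{ℝ^m} |w(x,y)| dy ≤ C_w, let f, g be an activation function and a learning modulation function, let γ ≥ 0, and let u_0 ∈ C_b(ℝ^m). If u is a solution of the initial value problem u_t(x,t) = −u(x,t) + ∫_{ℝ^m} w(x,y)[1 + γ g(u(x,t) − u(y,t))] f(u(y,t)) dy on ℝ^m × [0,∞) with u(x,0) = u_0(x), then |u(x,t)| ≤ max{‖u_0‖_∞, (1 + γ) C_w} for all (x,t) ∈ ℝ^m × [0,∞). -/

import Mathlib

open MeasureTheory Set

/-- Global estimates: if `u` solves the plastic neural field IVP with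
initial datum `u₀ ∈ C_b(ℝ^m)`, then `|u(x,t)| ≤ max {‖u₀‖_∞, (1+γ) C_w}` for all
`(x,t) ∈ ℝ^m × [0,∞)`. -/
theorem stmt_1 {m : ℕ} (hm : 1 ≤ m)
    (w : (Fin m → ℝ) → (Fin m → ℝ) → ℝ)
    (Cinf Cw Kw : ℝ) (hCw : 0 < Cw) (hKw : 0 < Kw)
    (hw_meas : Measurable (Function.uncurry w))
    (hw_bdd : ∀ x y, |w x y| ≤ Cinf)
    (hw_int : ∀ x, Integrable fun y => w x y)
    (hw_L1 : ∀ x, (∫ y, |w x y|) ≤ Cw)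
    (hw_lip : ∀ x x', (∫ y, |w x y - w x' y|) ≤ Kw * ‖x - x'‖)
    (f g : ℝ → ℝ)
    (hf_smooth : ContDiff ℝ 1 f) (hf_deriv : ∃ B, ∀ s, |deriv f s| ≤ B)
    (hf_range : ∀ s, 0 ≤ f s ∧ f s ≤ 1)
    (hg_smooth : ContDiff ℝ 1 g) (hg_deriv : ∃ B, ∀ s, |deriv g s| ≤ B)
    (hg_range : ∀ s, 0 ≤ g s ∧ g s ≤ 1)
    (γ : ℝ) (hγ : 0 ≤ γ)
    (u₀ : BoundedContinuousFunction (Fin m → ℝ) ℝ)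
    (u : (Fin m → ℝ) → ℝ → ℝ)
    (hu_meas : Measurable (Function.uncurry u))
    (hu_init : ∀ x, u x 0 = u₀ x)
    (hu_sol : ∀ (x : Fin m → ℝ), ∀ t ∈ Ici (0:ℝ),
      HasDerivWithinAt (u x)
        (-(u x t) + ∫ y, w x y * (1 + γ * g (u x t - u y t)) * f (u y t))
        (Ici 0) t) :
    ∀ (x : Fin m → ℝ), ∀ t ∈ Ici (0:ℝ), |u x t| ≤ max ‖u₀‖ ((1 + γ) * Cw) := by
  intro x t ht
  set M : ℝ := max ‖u₀‖ ((1 + γ) * Cw) with hM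
  set F : ℝ → ℝ := fun t => ∫ y, w x y * (1 + γ * g (u x t - u y t)) * f (u y t) with hFdef
  have hMnn : 0 ≤ M := le_trans (by positivity) (le_max_right _ _)
  -- bound on the integral term
  have hF : ∀ s : ℝ, |F s| ≤ M := by
    intro s
    have h1 : |F s| ≤ ∫ y, |w x y * (1 + γ * g (u x s - u y s)) * f (u y s)| := by
      have := norm_integral_le_integral_norm (μ := volume)
        (fun y => w x y * (1 + γ * g (u x s - u y s)) * f (u y s))
      simp only [Real.norm_eq_abs] at this
      exact this
    have h2 : (∫ y, |w x y * (1 + γ * g (u x s - u y s)) * f (u y s)|)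
        ≤ ∫ y, (1 + γ) * |w x y| := by
      apply integral_mono_of_nonneg
      · filter_upwards with y; positivity
      · exact ((hw_int x).abs).const_mul (1 + γ)
      · filter_upwards with y
        have hg1 := (hg_range (u x s - u y s)).1
        have hg2 := (hg_range (u x s - u y s)).2
        have hf1 := (hf_range (u y s)).1
        have hf2 := (hf_range (u y s)).2
        have habs : |w x y * (1 + γ * g (u x s - u y s)) * f (u y s)|
            = |w x y| * (1 + γ * g (u x s - u y s)) * f (u y s) := by
          rw [abs_mul, abs_mul, abs_of_nonneg (by positivity : (0:ℝ) ≤ 1 + γ * g (u x s - u y s)),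
            abs_of_nonneg hf1]
        rw [habs]
        have hwnn : (0:ℝ) ≤ |w x y| := abs_nonneg _
        nlinarith [mul_nonneg hwnn hγ, mul_nonneg (mul_nonneg hwnn hγ) hg1]
    have h3 : (∫ y, (1 + γ) * |w x y|) = (1 + γ) * ∫ y, |w x y| := integral_const_mul _ _
    have h4 : (1 + γ) * (∫ y, |w x y|) ≤ (1 + γ) * Cw :=
      mul_le_mul_of_nonneg_left (hw_L1 x) (by positivity)
    calc |F s| ≤ ∫ y, |w x y * (1 + γ * g (u x s - u y s)) * f (u y s)| := h1
      _ ≤ ∫ y, (1 + γ) * |w x y| := h2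
      _ = (1 + γ) * ∫ y, |w x y| := h3
      _ ≤ (1 + γ) * Cw := h4
      _ ≤ M := le_max_right _ _
  have hu0 : |u x 0| ≤ M := by
    rw [hu_init x]
    exact le_trans (u₀.norm_coe_le_norm x) (le_max_left _ _)
  have hcont : ContinuousOn (u x) (Ici 0) := fun s hs =>
    (hu_sol x s hs).continuousWithinAt
  have hIoi : interior (Ici (0:ℝ)) = Ioi 0 := interior_Ici
  -- upper bound: e^t (u x t - M) is antitone
  have hup : u x t ≤ M := by
    have hanti : AntitoneOn (fun s => Real.exp s * (u x s - M)) (Ici 0) := by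
      apply antitoneOn_of_hasDerivWithinAt_nonpos (convex_Ici 0)
        (f' := fun s => Real.exp s * (F s - M))
      · exact (Real.continuous_exp.continuousOn).mul (hcont.sub continuousOn_const)
      · intro s hs
        rw [hIoi] at hs ⊢
        have hd := ((hu_sol x s (mem_Ici.mpr (le_of_lt hs))).sub_const M).mono Ioi_subset_Ici_self
        have he := (Real.hasDerivAt_exp s).hasDerivWithinAt (s := Ioi (0:ℝ))
        have : HasDerivWithinAt (fun s => Real.exp s * (u x s - M)) _ (Ioi 0) s := he.mul hd
        convert this using 1
        ring
      · intro s hs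
        rw [hIoi] at hs
        have := hF s
        have h1 : F s - M ≤ 0 := by
          have := abs_le.mp (hF s)
          linarith [this.2]
        have : (0:ℝ) < Real.exp s := Real.exp_pos s
        nlinarith
    have h0 : Real.exp t * (u x t - M) ≤ Real.exp 0 * (u x 0 - M) :=
      hanti (self_mem_Ici) ht ht
    have h1 : u x 0 - M ≤ 0 := by
      have := abs_le.mp hu0; linarith [this.2]
    have h2 : Real.exp t * (u x t - M) ≤ 0 := by
      rw [Real.exp_zero] at h0; linarith
    nlinarith [Real.exp_pos t]
  -- lower bound: e^t (u x t + M) is monotone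
  have hlo : -M ≤ u x t := by
    have hmono : MonotoneOn (fun s => Real.exp s * (u x s + M)) (Ici 0) := by
      apply monotoneOn_of_hasDerivWithinAt_nonneg (convex_Ici 0)
        (f' := fun s => Real.exp s * (F s + M))
      · exact (Real.continuous_exp.continuousOn).mul (hcont.add continuousOn_const)
      · intro s hs
        rw [hIoi] at hs ⊢
        have hd := ((hu_sol x s (mem_Ici.mpr (le_of_lt hs))).add_const M).mono Ioi_subset_Ici_self
        have he := (Real.hasDerivAt_exp s).hasDerivWithinAt (s := Ioi (0:ℝ))
        have : HasDerivWithinAt (fun s => Real.exp s * (u x s + M)) _ (Ioi 0) s := he.mul hd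
        convert this using 1
        ring
      · intro s hs
        rw [hIoi] at hs
        have h1 : 0 ≤ F s + M := by
          have := abs_le.mp (hF s); linarith [this.1]
        have : (0:ℝ) < Real.exp s := Real.exp_pos s
        nlinarith
    have h0 : Real.exp 0 * (u x 0 + M) ≤ Real.exp t * (u x t + M) :=
      hmono (self_mem_Ici) ht ht
    have h1 : 0 ≤ u x 0 + M := by
      have := abs_le.mp hu0; linarith [this.1]
    have h2 : 0 ≤ Real.exp t * (u x t + M) := by
      rw [Real.exp_zero] at h0; linarith
    nlinarith [Real.exp_pos t]
  exact abs_le.mpr ⟨hlo, hup⟩
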